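/- Let q = 2^m with m ≥ 3, h a positive integer with gcd(h, m) = 1, and let α_1, ..., α_{q-1} enumerate F_q^*. The linear code C over F_q generated by the 3 × (q-1) matrix with rows (1,...,1), (α_1,...,α_{q-1}), (α_1^{2^h+1},...,α_{q-1}^{2^h+1}) has dimension 3 and minimum distance q-4; its dual has minimum distance 3. In particular C is a near-MDS [q-1, 3, q-4] code. -/

import Mathlib

lemma aux_gcd_pows (h m : ℕ) (hgcd : Nat.gcd h m = 1) :
    Nat.gcd (2 ^ h - 1) (2 ^ m - 1) = 1 := by
  set d := Nat.gcd (2 ^ h - 1) (2 ^ m - 1) with hd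
  have key : ∀ k : ℕ, d ∣ 2 ^ k - 1 → (2 : ZMod d) ^ k = 1 := by
    intro k hk
    have h1 : ((2 ^ k - 1 : ℕ) : ZMod d) = 0 := (ZMod.natCast_eq_zero_iff _ _).mpr hk
    have h2 : (2 : ℕ) ^ k - 1 + 1 = 2 ^ k :=
      Nat.succ_pred_eq_of_pos (Nat.two_pow_pos k)
    calc (2 : ZMod d) ^ k = ((2 ^ k : ℕ) : ZMod d) := by push_cast; ring
    _ = ((2 ^ k - 1 + 1 : ℕ) : ZMod d) := by rw [h2]
    _ = 1 := by push_cast [h1]; ring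
  have e1 : (2 : ZMod d) ^ h = 1 := key h (Nat.gcd_dvd_left _ _)
  have e2 : (2 : ZMod d) ^ m = 1 := key m (Nat.gcd_dvd_right _ _)
  have o1 : orderOf (2 : ZMod d) ∣ h := orderOf_dvd_of_pow_eq_one e1
  have o2 : orderOf (2 : ZMod d) ∣ m := orderOf_dvd_of_pow_eq_one e2
  have hdvd1 : orderOf (2 : ZMod d) ∣ 1 := by have := Nat.dvd_gcd o1 o2; rwa [hgcd] at this
  have h21 : (2 : ZMod d) = 1 := orderOf_eq_one_iff.mp (Nat.dvd_one.mp hdvd1)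
  have h10 : ((1 : ℕ) : ZMod d) = 0 := by
    have : (1 : ZMod d) = 0 := by linear_combination h21
    simpa using this
  exact Nat.dvd_one.mp ((ZMod.natCast_eq_zero_iff 1 d).mp h10)

lemma aux_pow_inj (F : Type*) [Field F] [Fintype F] (k : ℕ) (hk : 0 < k)
    (hco : Nat.gcd k (Fintype.card F - 1) = 1) :
    Function.Injective fun x : F => x ^ k := by
  intro x y hxy
  simp only at hxy
  rcases eq_or_ne y 0 with hy | hy
  · subst hy
    rw [zero_pow hk.ne'] at hxy
    exact pow_eq_zero_iff hk.ne' |>.mp hxy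
  · have hx : x ≠ 0 := by
      intro hx0
      rw [hx0, zero_pow hk.ne'] at hxy
      exact hy (pow_eq_zero_iff hk.ne' |>.mp hxy.symm)
    have hu : (x / y) ^ k = 1 := by
      rw [div_pow, hxy, div_self (pow_ne_zero _ hy)]
    have hu2 : (x / y) ^ (Fintype.card F - 1) = 1 :=
      FiniteField.pow_card_sub_one_eq_one _ (div_ne_zero hx hy)
    have o1 : orderOf (x / y) ∣ k := orderOf_dvd_of_pow_eq_one hu
    have o2 : orderOf (x / y) ∣ (Fintype.card F - 1) := orderOf_dvd_of_pow_eq_one hu2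
    have : orderOf (x / y) ∣ 1 := hco ▸ Nat.dvd_gcd o1 o2
    have : x / y = 1 := orderOf_eq_one_iff.mp (Nat.dvd_one.mp this)
    field_simp at this
    exact this

section Key
variable {F : Type*} [Field F] [Fintype F] [DecidableEq F] [CharP F 2]

omit [Fintype F] [DecidableEq F] in
lemma aux_key (h' : ℕ) (B C r x : F) (hr : r ^ (2 ^ h' + 1) + B * r + C = 0) (hx : x ≠ r) :
    (x ^ (2 ^ h' + 1) + B * x + C = 0) ↔
      ((r ^ (2 ^ h') + B) * ((x + r)⁻¹) ^ (2 ^ h') + r * (x + r)⁻¹ + 1 = 0) := by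
  haveI : Fact (Nat.Prime 2) := ⟨Nat.prime_two⟩
  set e := 2 ^ h' with he
  set s := x + r with hs
  set t := s⁻¹ with ht
  have hrr : r + r = 0 := CharTwo.add_self_eq_zero r
  have hs0 : s ≠ 0 := by
    intro h0
    exact hx (by rw [hs] at h0; linear_combination h0 - hrr)
  have hts : t * s = 1 := inv_mul_cancel₀ hs0
  have hxsr : x = s + r := by rw [hs]; linear_combination - hrr
  have hf : (s + r) ^ e = s ^ e + r ^ e := by rw [he]; exact add_pow_char_pow s r 2 h'
  have hr' : r ^ e * r + B * r + C = 0 := by rw [← pow_succ]; exact hr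
  have hxe : x ^ (e + 1) + B * x + C = s ^ e * s + r * s ^ e + (r ^ e + B) * s := by
    calc x ^ (e + 1) + B * x + C = (s + r) ^ e * (s + r) + B * (s + r) + C := by
          rw [← pow_succ, ← hxsr]
    _ = (s ^ e + r ^ e) * (s + r) + B * (s + r) + C := by rw [hf]
    _ = s ^ e * s + r * s ^ e + (r ^ e + B) * s := by linear_combination hr'
  have hPQ : t ^ e * s ^ e = 1 := by rw [← mul_pow, hts, one_pow]
  have hfac : (r ^ e + B) * t ^ e + r * t + 1
      = (t ^ e * t) * (s ^ e * s + r * s ^ e + (r ^ e + B) * s) := by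
    linear_combination (-(t * s + r * t)) * hPQ + (-(1 + (r ^ e + B) * t ^ e)) * hts
  constructor
  · intro h0
    rw [hxe] at h0
    rw [hfac, h0, mul_zero]
  · intro h0
    rw [hfac] at h0
    rcases mul_eq_zero.mp h0 with h1 | h1
    · exact absurd h1 (by
        have ht0 : t ≠ 0 := inv_ne_zero hs0
        exact mul_ne_zero (pow_ne_zero _ ht0) ht0)
    · rw [hxe]; exact h1

lemma aux_roots (h' : ℕ) (hh' : 0 < h')
    (hinj : Function.Injective fun x : F => x ^ (2 ^ h' - 1))
    (a b c : F) (hne : ¬(a = 0 ∧ b = 0 ∧ c = 0)) :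
    {x : F | a * x ^ (2 ^ h' + 1) + b * x + c = 0}.ncard ≤ 3 := by
  haveI : Fact (Nat.Prime 2) := ⟨Nat.prime_two⟩
  set e := 2 ^ h' with he
  have he1 : 1 ≤ e := Nat.one_le_two_pow
  have h2F : (2 : F) = 0 := CharTwo.two_eq_zero
  set R := {x : F | a * x ^ (e + 1) + b * x + c = 0} with hR
  rcases eq_or_ne a 0 with ha | ha
  · rcases eq_or_ne b 0 with hb | hb
    · have hc : c ≠ 0 := fun hc => hne ⟨ha, hb, hc⟩
      have : R = ∅ := by
        ext x; simp only [hR, Set.mem_setOf_eq, Set.mem_empty_iff_false, iff_false]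
        rw [ha, hb]; simpa using hc
      rw [this]; simp
    · have hsub : R ⊆ {-(b⁻¹ * c)} := by
        intro x hxR
        simp only [hR, Set.mem_setOf_eq] at hxR
        rw [ha] at hxR
        have hbi : b * b⁻¹ = 1 := mul_inv_cancel₀ hb
        have : x = -(b⁻¹ * c) := by linear_combination b⁻¹ * hxR - x * hbi
        exact Set.mem_singleton_iff.mpr this
      calc R.ncard ≤ ({-(b⁻¹ * c)} : Set F).ncard := Set.ncard_le_ncard hsub (Set.toFinite _)
      _ ≤ 3 := by simp
  · rcases R.eq_empty_or_nonempty with hRe | ⟨r, hrR⟩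
    · rw [hRe]; simp
    set B := b * a⁻¹ with hB
    set C := c * a⁻¹ with hC
    have hRR : ∀ x, x ∈ R ↔ x ^ (e + 1) + B * x + C = 0 := by
      intro x
      simp only [hR, Set.mem_setOf_eq]
      have hai : a * a⁻¹ = 1 := mul_inv_cancel₀ ha
      constructor
      · intro hx
        linear_combination a⁻¹ * hx - x ^ (e + 1) * hai
      · intro hx
        linear_combination a * hx - (b * x + c) * hai
    have hr : r ^ (e + 1) + B * r + C = 0 := (hRR r).mp hrR
    set β := r ^ e + B with hβ
    by_cases hex : ∃ x ∈ R, x ≠ r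
    · obtain ⟨x1, hx1R, hx1r⟩ := hex
      set t0 := (x1 + r)⁻¹ with ht0
      have hs1 : x1 + r ≠ 0 := by
        intro h0
        exact hx1r (by linear_combination h0 - CharTwo.add_self_eq_zero r)
      have ht0S : β * t0 ^ e + r * t0 + 1 = 0 := (aux_key h' B C r x1 hr hx1r).mp ((hRR x1).mp hx1R)
      have key_t : ∀ x ∈ R, x ≠ r → β * ((x + r)⁻¹) ^ e + r * (x + r)⁻¹ + 1 = 0 := by
        intro x hxR hxr
        exact (aux_key h' B C r x hr hxr).mp ((hRR x).mp hxR)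
      have inv_rec : ∀ x : F, x ≠ r → (x + r)⁻¹⁻¹ + r = x := by
        intro x hxr
        have hx0 : x + r ≠ 0 := by
          intro h0; exact hxr (by linear_combination h0 - CharTwo.add_self_eq_zero r)
        rw [inv_inv]
        linear_combination CharTwo.add_self_eq_zero r
      rcases eq_or_ne β 0 with hβ0 | hβ0
      · have hsub : R ⊆ {r, x1} := by
          intro x hxR
          rcases eq_or_ne x r with hxr | hxr
          · simp [hxr]
          have htS := key_t x hxR hxr
          rw [hβ0, zero_mul, zero_add] at htS
          have ht0S' := ht0S; rw [hβ0, zero_mul, zero_add] at ht0S'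
          have hr0 : r ≠ 0 := by
            intro h0; rw [h0] at htS; simp at htS
          have : (x + r)⁻¹ = t0 := by
            have : r * ((x + r)⁻¹ + t0) = 0 := by linear_combination htS + ht0S' - h2F
            rcases mul_eq_zero.mp this with h | h
            · exact absurd h hr0
            · linear_combination h - CharTwo.add_self_eq_zero t0
          have := congrArg (fun z => z⁻¹ + r) this
          rw [inv_rec x hxr, ht0, inv_rec x1 hx1r] at this
          simp [this]
        calc R.ncard ≤ ({r, x1} : Set F).ncard := Set.ncard_le_ncard hsub (Set.toFinite _)
        _ ≤ 3 := le_trans (Set.ncard_insert_le _ _) (by simp)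
      · obtain ⟨k0, hk0⟩ := (Finite.injective_iff_surjective.mp hinj) (r * β⁻¹)
        simp only at hk0
        have hsub : R ⊆ {r, x1, (t0 + k0)⁻¹ + r} := by
          intro x hxR
          rcases eq_or_ne x r with hxr | hxr
          · simp [hxr]
          rcases eq_or_ne x x1 with hxx1 | hxx1
          · simp [hxx1]
          have htS := key_t x hxR hxr
          set t := (x + r)⁻¹ with htd
          have htne : t ≠ t0 := by
            intro h0
            apply hxx1
            have := congrArg (fun z => z⁻¹ + r) h0
            rw [htd] at this
            rw [inv_rec x hxr] at this
            rw [ht0, inv_rec x1 hx1r] at this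
            exact this
          set u := t + t0 with hu
          have hu0 : u ≠ 0 := by
            intro h0
            exact htne (by linear_combination h0 - CharTwo.add_self_eq_zero t0)
          have hfrob : (t + t0) ^ e = t ^ e + t0 ^ e := by
            rw [he]; exact add_pow_char_pow t t0 2 h'
          have hueq : β * u ^ e + r * u = 0 := by
            rw [hu, hfrob]
            linear_combination htS + ht0S - h2F
          have hue : u ^ e = u ^ (e - 1) * u := by
            rw [← pow_succ, Nat.sub_add_cancel he1]
          have h3 : β * u ^ (e - 1) + r = 0 := by
            have : u * (β * u ^ (e - 1) + r) = 0 := by rw [hue] at hueq; linear_combination hueq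
            rcases mul_eq_zero.mp this with h | h
            · exact absurd h hu0
            · exact h
          have hbi : β * β⁻¹ = 1 := mul_inv_cancel₀ hβ0
          have h4 : u ^ (e - 1) = r * β⁻¹ := by
            linear_combination β⁻¹ * h3 - u ^ (e - 1) * hbi - r * β⁻¹ * h2F
          have huk : u = k0 := hinj (by simp only; rw [h4, hk0])
          have htk : t = t0 + k0 := by
            rw [← huk, hu]; linear_combination - CharTwo.add_self_eq_zero t0
          have : x = (t0 + k0)⁻¹ + r := by
            rw [← htk, htd, inv_rec x hxr]
          simp [this]
        calc R.ncard ≤ ({r, x1, (t0 + k0)⁻¹ + r} : Set F).ncard :=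
              Set.ncard_le_ncard hsub (Set.toFinite _)
        _ ≤ 3 := le_trans (Set.ncard_insert_le _ _)
              (by have := Set.ncard_insert_le x1 ({(t0 + k0)⁻¹ + r} : Set F); simp at this ⊢; omega)
    · have hsub : R ⊆ {r} := by
        intro x hxR
        by_contra hxr
        exact hex ⟨x, hxR, by simpa using hxr⟩
      calc R.ncard ≤ ({r} : Set F).ncard := Set.ncard_le_ncard hsub (Set.toFinite _)
      _ ≤ 3 := by simp

lemma aux_three (h' : ℕ) (hh' : 0 < h') (hcard : 3 ≤ Fintype.card F)
    (hinj : Function.Injective fun x : F => x ^ (2 ^ h' - 1)) :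
    ∃ B C x1 x2 x3 : F, x1 ≠ x2 ∧ x1 ≠ x3 ∧ x2 ≠ x3 ∧ x1 ≠ 0 ∧ x2 ≠ 0 ∧ x3 ≠ 0 ∧
      {x : F | x ^ (2 ^ h' + 1) + B * x + C = 0} = {x1, x2, x3} := by
  haveI : Fact (Nat.Prime 2) := ⟨Nat.prime_two⟩
  set e := 2 ^ h' with he
  have he1 : 1 ≤ e := Nat.one_le_two_pow
  have he2 : 2 ≤ e := by
    have : 2 ^ 1 ≤ 2 ^ h' := Nat.pow_le_pow_right (by norm_num) hh'
    simpa using this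
  have h2F : (2 : F) = 0 := CharTwo.two_eq_zero
  obtain ⟨w, hw⟩ : ∃ w : F, w ≠ 0 ∧ w ≠ 1 := by
    have hlt : ({0, 1} : Finset F).card < Fintype.card F := by
      have : ({0, 1} : Finset F).card ≤ 2 := (Finset.card_insert_le _ _).trans (by simp)
      omega
    have : (({0, 1} : Finset F)ᶜ).Nonempty := by
      rw [← Finset.card_pos, Finset.card_compl]
      omega
    obtain ⟨w, hw⟩ := this
    rw [Finset.mem_compl] at hw
    simp only [Finset.mem_insert, Finset.mem_singleton, not_or] at hw
    exact ⟨w, hw⟩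
  obtain ⟨hw0, hw1⟩ := hw
  have hw10 : 1 + w ≠ 0 := by
    intro h0; exact hw1 (by linear_combination h0 - h2F)
  set β := (1 + w) * (w ^ e)⁻¹ with hβ
  have hβ0 : β ≠ 0 := mul_ne_zero hw10 (inv_ne_zero (pow_ne_zero _ hw0))
  have hwei : w ^ e * (w ^ e)⁻¹ = 1 := mul_inv_cancel₀ (pow_ne_zero _ hw0)
  have hwS : β * w ^ e + w + 1 = 0 := by
    rw [hβ]
    linear_combination (1 + w) * hwei + (1 + w) * h2F
  set B := β + 1 with hB
  set C := β with hC
  have hr : (1 : F) ^ (e + 1) + B * 1 + C = 0 := by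
    rw [hB, hC]; linear_combination (1 + β) * h2F
  have hβB : (1 : F) ^ e + B = β := by rw [hB]; linear_combination h2F
  obtain ⟨k0, hk0⟩ := (Finite.injective_iff_surjective.mp hinj) β⁻¹
  simp only at hk0
  have hβi0 : β⁻¹ ≠ 0 := inv_ne_zero hβ0
  have hk00 : k0 ≠ 0 := by
    intro h0
    rw [h0, zero_pow (by omega)] at hk0
    exact hβi0 hk0.symm
  have hk0e : β * k0 ^ e + k0 = 0 := by
    have : k0 ^ e = k0 ^ (e - 1) * k0 := by rw [← pow_succ, Nat.sub_add_cancel he1]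
    rw [this, hk0]
    have hbi : β * β⁻¹ = 1 := mul_inv_cancel₀ hβ0
    linear_combination k0 * hbi + k0 * h2F
  set w' := w + k0 with hw'
  have hw'S : β * w' ^ e + w' + 1 = 0 := by
    have hfrob : (w + k0) ^ e = w ^ e + k0 ^ e := by rw [he]; exact add_pow_char_pow w k0 2 h'
    rw [hw', hfrob]
    linear_combination hwS + hk0e
  have hw'0 : w' ≠ 0 := by
    intro h0; rw [h0] at hw'S; simp at hw'S
    exact one_ne_zero (by linear_combination hw'S)
  have hw'1 : w' ≠ 1 := by
    intro h0; rw [h0] at hw'S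
    exact hβ0 (by linear_combination hw'S - h2F)
  have hww' : w ≠ w' := by
    intro h0
    apply hk00
    rw [hw'] at h0
    linear_combination - h0
  set x2 := w⁻¹ + 1 with hx2
  set x3 := w'⁻¹ + 1 with hx3
  have hwi0 : w⁻¹ ≠ 0 := inv_ne_zero hw0
  have hw'i0 : w'⁻¹ ≠ 0 := inv_ne_zero hw'0
  have hx21 : x2 ≠ 1 := by
    intro h0; exact hwi0 (by rw [hx2] at h0; linear_combination h0)
  have hx31 : x3 ≠ 1 := by
    intro h0; exact hw'i0 (by rw [hx3] at h0; linear_combination h0)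
  have hx20 : x2 ≠ 0 := by
    intro h0
    apply hw1
    have : w⁻¹ = 1 := by rw [hx2] at h0; linear_combination h0 - h2F
    have := congrArg (fun z => z⁻¹) this
    simpa [inv_inv] using this
  have hx30 : x3 ≠ 0 := by
    intro h0
    apply hw'1
    have : w'⁻¹ = 1 := by rw [hx3] at h0; linear_combination h0 - h2F
    have := congrArg (fun z => z⁻¹) this
    simpa [inv_inv] using this
  have hx23 : x2 ≠ x3 := by
    intro h0
    apply hww'
    have : w⁻¹ = w'⁻¹ := by rw [hx2, hx3] at h0; linear_combination h0
    have := congrArg (fun z => z⁻¹) this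
    simpa [inv_inv] using this
  have hx2inv : (x2 + 1)⁻¹ = w := by
    rw [hx2]
    have : w⁻¹ + 1 + 1 = w⁻¹ := by linear_combination h2F
    rw [this, inv_inv]
  have hx3inv : (x3 + 1)⁻¹ = w' := by
    rw [hx3]
    have : w'⁻¹ + 1 + 1 = w'⁻¹ := by linear_combination h2F
    rw [this, inv_inv]
  refine ⟨B, C, 1, x2, x3, hx21.symm, hx31.symm, hx23, one_ne_zero, hx20, hx30, ?_⟩
  ext x
  simp only [Set.mem_setOf_eq, Set.mem_insert_iff, Set.mem_singleton_iff]
  constructor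
  · intro hx
    rcases eq_or_ne x 1 with hx1 | hx1
    · exact Or.inl hx1
    right
    have hxne0 : x + 1 ≠ 0 := by
      intro h0; exact hx1 (by linear_combination h0 - h2F)
    have htS := (aux_key h' B C 1 x hr hx1).mp hx
    rw [hβB] at htS
    set t := (x + 1)⁻¹ with htd
    have htS' : β * t ^ e + t + 1 = 0 := by linear_combination htS
    have hxt : x = t⁻¹ + 1 := by
      rw [htd, inv_inv]
      linear_combination - h2F
    rcases eq_or_ne t w with htw | htw
    · left; rw [hxt, htw, hx2]
    · right
      have hfrob : (t + w) ^ e = t ^ e + w ^ e := by rw [he]; exact add_pow_char_pow t w 2 h'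
      set u := t + w with hu
      have hu0 : u ≠ 0 := by
        intro h0
        exact htw (by rw [hu] at h0; linear_combination h0 - CharTwo.add_self_eq_zero w)
      have hueq : β * u ^ e + u = 0 := by
        rw [hu, hfrob]
        linear_combination htS' + hwS - h2F
      have hue : u ^ e = u ^ (e - 1) * u := by rw [← pow_succ, Nat.sub_add_cancel he1]
      have h3 : β * u ^ (e - 1) + 1 = 0 := by
        have : u * (β * u ^ (e - 1) + 1) = 0 := by rw [hue] at hueq; linear_combination hueq
        rcases mul_eq_zero.mp this with h | h
        · exact absurd h hu0
        · exact h
      have hbi : β * β⁻¹ = 1 := mul_inv_cancel₀ hβ0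
      have h4 : u ^ (e - 1) = β⁻¹ := by
        linear_combination β⁻¹ * h3 - u ^ (e - 1) * hbi - β⁻¹ * h2F
      have huk : u = k0 := hinj (by simp only; rw [h4, hk0])
      have : t = w' := by
        rw [hw', ← huk, hu]
        linear_combination - CharTwo.add_self_eq_zero w
      rw [hxt, this, hx3]
  · intro hx
    rcases hx with hx1 | hx2' | hx3'
    · rw [hx1]; exact hr
    · rw [hx2']
      refine (aux_key h' B C 1 x2 hr hx21).mpr ?_
      rw [hβB, hx2inv]
      linear_combination hwS
    · rw [hx3']
      refine (aux_key h' B C 1 x3 hr hx31).mpr ?_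
      rw [hβB, hx3inv]
      linear_combination hw'S
end Key
theorem stmt18 (m h : ℕ) (hm : 3 ≤ m) (hh : 0 < h) (hgcd : Nat.gcd h m = 1)
    (F : Type*) [Field F] [Fintype F] [DecidableEq F]
    (hF : Fintype.card F = 2 ^ m)
    (cw : F → F → F → ({x : F // x ≠ 0} → F))
    (hcw : cw = fun a b c (x : {x : F // x ≠ 0}) =>
      a * (x : F) ^ (2 ^ h + 1) + b * (x : F) + c)
    (wt : ({x : F // x ≠ 0} → F) → ℕ)
    (hwt : wt = fun w => {x | w x ≠ 0}.ncard) :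
    -- the code has dimension 3
    (Function.Injective (fun abc : F × F × F => cw abc.1 abc.2.1 abc.2.2)) ∧
    -- minimum distance is q - 4
    (∀ a b c : F, ¬(a = 0 ∧ b = 0 ∧ c = 0) → 2 ^ m - 4 ≤ wt (cw a b c)) ∧
    (∃ a b c : F, wt (cw a b c) = 2 ^ m - 4) ∧
    -- the dual code has minimum distance 3
    (∀ v : {x : F // x ≠ 0} → F, v ≠ 0 →
      (∀ a b c : F, ∑ x : {x : F // x ≠ 0}, v x * cw a b c x = 0) →
        3 ≤ wt v) ∧
    (∃ v : {x : F // x ≠ 0} → F, v ≠ 0 ∧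
      (∀ a b c : F, ∑ x : {x : F // x ≠ 0}, v x * cw a b c x = 0) ∧
        wt v = 3) := by
  haveI : Fact (Nat.Prime 2) := ⟨Nat.prime_two⟩
  have hq8 : 8 ≤ 2 ^ m := by
    calc (8 : ℕ) = 2 ^ 3 := by norm_num
    _ ≤ 2 ^ m := Nat.pow_le_pow_right (by norm_num) hm
  have hp2 : ringChar F = 2 := by
    obtain ⟨n, hp, hcard⟩ := FiniteField.card F (ringChar F)
    have hdvd : ringChar F ∣ 2 ^ m := by
      rw [← hF, hcard]
      exact dvd_pow_self _ n.pos.ne'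
    exact (Nat.prime_dvd_prime_iff_eq hp Nat.prime_two).mp (hp.dvd_of_dvd_pow hdvd)
  haveI hchar : CharP F 2 := by rw [← hp2]; exact ringChar.charP F
  have h2F : (2 : F) = 0 := CharTwo.two_eq_zero
  have h2pow : 2 ≤ 2 ^ h := by
    calc (2 : ℕ) = 2 ^ 1 := rfl
    _ ≤ 2 ^ h := Nat.pow_le_pow_right (by norm_num) hh
  have hinj : Function.Injective fun x : F => x ^ (2 ^ h - 1) :=
    aux_pow_inj F _ (by omega) (by rw [hF]; exact aux_gcd_pows h m hgcd)
  have hcards : Fintype.card {x : F // x ≠ 0} = 2 ^ m - 1 := by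
    have h1 : Fintype.card {x : F // ¬ x = 0} = Fintype.card F - Fintype.card {x : F // x = 0} :=
      Fintype.card_subtype_compl _
    rw [Fintype.card_subtype_eq (0 : F), hF] at h1
    exact h1
  have hwtf : ∀ w : {x : F // x ≠ 0} → F,
      {X : {x : F // x ≠ 0} | w X = 0}.ncard + {X : {x : F // x ≠ 0} | w X ≠ 0}.ncard
        = 2 ^ m - 1 := by
    intro w
    have h1 : {X : {x : F // x ≠ 0} | w X ≠ 0} = {X : {x : F // x ≠ 0} | w X = 0}ᶜ := rfl
    rw [h1, Set.ncard_add_ncard_compl, Nat.card_eq_fintype_card, hcards]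
  have hzle : ∀ a b c : F,
      {X : {x : F // x ≠ 0} | a * (X : F) ^ (2 ^ h + 1) + b * (X : F) + c = 0}.ncard
        ≤ {x : F | a * x ^ (2 ^ h + 1) + b * x + c = 0}.ncard := by
    intro a b c
    rw [← Set.ncard_image_of_injective _ (Subtype.val_injective (p := fun x : F => x ≠ 0))]
    apply Set.ncard_le_ncard _ (Set.toFinite _)
    rintro y ⟨X, hX, rfl⟩
    exact hX
  obtain ⟨B, C, x1, x2, x3, h12, h13, h23, h01, h02, h03, hset⟩ :=
    aux_three h hh (by rw [hF]; omega) hinj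
  have hroot1 : x1 ^ (2 ^ h + 1) + B * x1 + C = 0 := by
    have : x1 ∈ {x : F | x ^ (2 ^ h + 1) + B * x + C = 0} := by rw [hset]; simp
    exact this
  have hroot2 : x2 ^ (2 ^ h + 1) + B * x2 + C = 0 := by
    have : x2 ∈ {x : F | x ^ (2 ^ h + 1) + B * x + C = 0} := by rw [hset]; simp
    exact this
  have hroot3 : x3 ^ (2 ^ h + 1) + B * x3 + C = 0 := by
    have : x3 ∈ {x : F | x ^ (2 ^ h + 1) + B * x + C = 0} := by rw [hset]; simp
    exact this
  set X1 : {x : F // x ≠ 0} := ⟨x1, h01⟩ with hX1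
  set X2 : {x : F // x ≠ 0} := ⟨x2, h02⟩ with hX2
  set X3 : {x : F // x ≠ 0} := ⟨x3, h03⟩ with hX3
  have hne12 : X1 ≠ X2 := fun hE => h12 (congrArg Subtype.val hE)
  have hne13 : X1 ≠ X3 := fun hE => h13 (congrArg Subtype.val hE)
  have hne23 : X2 ≠ X3 := fun hE => h23 (congrArg Subtype.val hE)
  refine ⟨?_, ?_, ?_, ?_, ?_⟩
  · -- injectivity
    rintro ⟨a, b, c⟩ ⟨a', b', c'⟩ hpq
    simp only [hcw] at hpq
    have hall : ∀ x : F, x ≠ 0 →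
        (a + a') * x ^ (2 ^ h + 1) + (b + b') * x + (c + c') = 0 := by
      intro x hx
      have := congrFun hpq ⟨x, hx⟩
      simp only at this
      linear_combination this + (a' * x ^ (2 ^ h + 1) + b' * x + c') * h2F
    have habc : a + a' = 0 ∧ b + b' = 0 ∧ c + c' = 0 := by
      by_contra hne
      have h3 := aux_roots h hh hinj _ _ _ hne
      have hsub : {x : F | x ≠ 0}
          ⊆ {x : F | (a + a') * x ^ (2 ^ h + 1) + (b + b') * x + (c + c') = 0} :=
        fun x hx => hall x hx
      have hn0 : {x : F | x ≠ 0}.ncard = 2 ^ m - 1 := by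
        have h1 : {x : F | x ≠ 0} = ({0} : Set F)ᶜ := by ext x; simp
        have h2 := Set.ncard_add_ncard_compl ({0} : Set F)
        rw [Set.ncard_singleton, Nat.card_eq_fintype_card, hF] at h2
        rw [h1]
        omega
      have hge := Set.ncard_le_ncard hsub (Set.toFinite _)
      rw [hn0] at hge
      omega
    obtain ⟨ha, hb, hc⟩ := habc
    have e1 : a = a' := by linear_combination ha - a' * h2F
    have e2 : b = b' := by linear_combination hb - b' * h2F
    have e3 : c = c' := by linear_combination hc - c' * h2F
    simp only [Prod.mk.injEq]
    exact ⟨e1, e2, e3⟩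
  · -- minimum distance lower bound
    intro a b c hne
    have h3 := le_trans (hzle a b c) (aux_roots h hh hinj a b c hne)
    have hf := hwtf (cw a b c)
    simp only [hcw] at hf h3
    simp only [hwt, hcw]
    omega
  · -- codeword of weight q - 4
    refine ⟨1, B, C, ?_⟩
    have hf := hwtf (cw 1 B C)
    simp only [hcw, one_mul] at hf
    simp only [hwt, hcw, one_mul]
    have hZ : {X : {x : F // x ≠ 0} | (X : F) ^ (2 ^ h + 1) + B * (X : F) + C = 0}
        = {X1, X2, X3} := by
      ext X
      simp only [Set.mem_setOf_eq, Set.mem_insert_iff, Set.mem_singleton_iff]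
      constructor
      · intro hX
        have hmem : (X : F) ∈ {x : F | x ^ (2 ^ h + 1) + B * x + C = 0} := hX
        rw [hset] at hmem
        rcases hmem with hE | hE | hE
        · exact Or.inl (Subtype.ext hE)
        · exact Or.inr (Or.inl (Subtype.ext hE))
        · exact Or.inr (Or.inr (Subtype.ext hE))
      · rintro (rfl | rfl | rfl)
        · exact hroot1
        · exact hroot2
        · exact hroot3
    rw [hZ] at hf
    have hz3 : ({X1, X2, X3} : Set {x : F // x ≠ 0}).ncard = 3 := by
      rw [Set.ncard_insert_of_notMem (by simp [hne12, hne13]), Set.ncard_pair hne23]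
    rw [hz3] at hf
    omega
  · -- dual distance ≥ 3
    intro v hv hortho
    have s1 : ∑ X : {x : F // x ≠ 0}, v X = 0 := by
      have := hortho 0 0 1
      simp only [hcw, zero_mul, zero_add, mul_one] at this
      exact this
    have s2 : ∑ X : {x : F // x ≠ 0}, v X * (X : F) = 0 := by
      have := hortho 0 1 0
      simp only [hcw, zero_mul, zero_add, add_zero, one_mul] at this
      exact this
    by_contra hlt
    push_neg at hlt
    simp only [hwt] at hlt
    classical
    set S := Finset.univ.filter (fun X : {x : F // x ≠ 0} => v X ≠ 0) with hS
    have hsetS : {X : {x : F // x ≠ 0} | v X ≠ 0} = ↑S := by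
      ext X; simp [hS]
    rw [hsetS, Set.ncard_coe_finset] at hlt
    have hSne : S.Nonempty := by
      obtain ⟨X, hX⟩ := Function.ne_iff.mp hv
      refine ⟨X, ?_⟩
      simp only [hS, Finset.mem_filter, Finset.mem_univ, true_and]
      simpa using hX
    have hsum1 : ∑ X ∈ S, v X = 0 := by
      refine (Finset.sum_subset (Finset.subset_univ S) ?_).trans s1
      intro X _ hX
      simp only [hS, Finset.mem_filter, Finset.mem_univ, true_and, not_not] at hX
      exact hX
    have hsum2 : ∑ X ∈ S, v X * (X : F) = 0 := by
      refine (Finset.sum_subset (Finset.subset_univ S) ?_).trans s2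
      intro X _ hX
      simp only [hS, Finset.mem_filter, Finset.mem_univ, true_and, not_not] at hX
      rw [hX, zero_mul]
    have hcpos : 1 ≤ S.card := Finset.card_pos.mpr hSne
    have hcases : S.card = 1 ∨ S.card = 2 := by omega
    have hmemS : ∀ X ∈ S, v X ≠ 0 := by
      intro X hX
      simp only [hS, Finset.mem_filter, Finset.mem_univ, true_and] at hX
      exact hX
    rcases hcases with h1 | h2
    · obtain ⟨X0, hX0⟩ := Finset.card_eq_one.mp h1
      rw [hX0, Finset.sum_singleton] at hsum1
      exact hmemS X0 (by rw [hX0]; simp) hsum1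
    · obtain ⟨X0, Y0, hne, hX01⟩ := Finset.card_eq_two.mp h2
      rw [hX01, Finset.sum_pair hne] at hsum1 hsum2
      have hv0 : v X0 ≠ 0 := hmemS X0 (by rw [hX01]; simp)
      have hvne : (X0 : F) ≠ (Y0 : F) := fun hE => hne (Subtype.ext hE)
      have hprod : v X0 * ((X0 : F) + (Y0 : F)) = 0 := by
        linear_combination hsum2 - (Y0 : F) * hsum1 + v X0 * (Y0 : F) * h2F
      rcases mul_eq_zero.mp hprod with hE | hE
      · exact hv0 hE
      · exact hvne (by linear_combination hE - CharTwo.add_self_eq_zero (Y0 : F))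
  · -- dual codeword of weight 3
    classical
    have hd23 : x2 + x3 ≠ 0 := fun h0 => h23 (by linear_combination h0 - CharTwo.add_self_eq_zero x3)
    have hd13 : x1 + x3 ≠ 0 := fun h0 => h13 (by linear_combination h0 - CharTwo.add_self_eq_zero x3)
    have hd12 : x1 + x2 ≠ 0 := fun h0 => h12 (by linear_combination h0 - CharTwo.add_self_eq_zero x2)
    have hne21 : X2 ≠ X1 := Ne.symm hne12
    have hne31 : X3 ≠ X1 := Ne.symm hne13
    have hne32 : X3 ≠ X2 := Ne.symm hne23
    set vv : {x : F // x ≠ 0} → F := fun X =>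
      if X = X1 then x2 + x3 else if X = X2 then x1 + x3 else if X = X3 then x1 + x2 else 0
      with hvv
    have hv1 : vv X1 = x2 + x3 := by simp [hvv]
    have hv2 : vv X2 = x1 + x3 := by simp [hvv, hne21]
    have hv3 : vv X3 = x1 + x2 := by simp [hvv, hne31, hne32]
    have hc1 : ((X1 : {x : F // x ≠ 0}) : F) = x1 := rfl
    have hc2 : ((X2 : {x : F // x ≠ 0}) : F) = x2 := rfl
    have hc3 : ((X3 : {x : F // x ≠ 0}) : F) = x3 := rfl
    refine ⟨vv, ?_, ?_, ?_⟩
    · intro h0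
      have := congrFun h0 X1
      rw [hv1] at this
      exact hd23 (by simpa using this)
    · intro a b c
      simp only [hcw]
      have hsplit : ∑ X : {x : F // x ≠ 0}, vv X * (a * (X : F) ^ (2 ^ h + 1) + b * (X : F) + c)
          = ∑ X ∈ ({X1, X2, X3} : Finset {x : F // x ≠ 0}),
              vv X * (a * (X : F) ^ (2 ^ h + 1) + b * (X : F) + c) := by
        symm
        apply Finset.sum_subset (Finset.subset_univ _)
        intro X _ hX
        simp only [Finset.mem_insert, Finset.mem_singleton, not_or] at hX
        obtain ⟨n1, n2, n3⟩ := hX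
        have : vv X = 0 := by simp [hvv, n1, n2, n3]
        rw [this, zero_mul]
      rw [hsplit]
      rw [Finset.sum_insert (by simp [hne12, hne13]), Finset.sum_pair hne23]
      rw [hv1, hv2, hv3, hc1, hc2, hc3]
      linear_combination a * (x2 + x3) * hroot1 + a * (x1 + x3) * hroot2 +
        a * (x1 + x2) * hroot3 +
        ((b - a * B) * (x1 * x2 + x1 * x3 + x2 * x3) + (c - a * C) * (x1 + x2 + x3)) * h2F
    · simp only [hwt]
      have hsupp : {X : {x : F // x ≠ 0} | vv X ≠ 0} = {X1, X2, X3} := by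
        ext X
        simp only [Set.mem_setOf_eq, Set.mem_insert_iff, Set.mem_singleton_iff]
        constructor
        · intro hX
          by_contra hcon
          push_neg at hcon
          obtain ⟨n1, n2, n3⟩ := hcon
          exact hX (by simp [hvv, n1, n2, n3])
        · rintro (rfl | rfl | rfl)
          · rw [hv1]; exact hd23
          · rw [hv2]; exact hd13
          · rw [hv3]; exact hd12
      rw [hsupp]
      rw [Set.ncard_insert_of_notMem (by simp [hne12, hne13]), Set.ncard_pair hne23]
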